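/- Let D be an integral domain with quotient field K such that the intersection of the maximal ideals of D of finite index (i.e., those maximal ideals m with D/m a finite ring) is the zero ideal, and let n be a positive integer. Then Int(Mₙ(D)) = Int(Mₙ^{irr}(D), Mₙ(D)), where Mₙ^{irr}(D) is the set of matrices in Mₙ(D) whose characteristic polynomial is irreducible in D[X]; that is, Mₙ^{irr}(D) is polynomially dense in Mₙ(D). -/

import Mathlib

open Polynomial

/-- `IntOn D K S` is the set of polynomials `f ∈ K[X]` that are integer-valued on the set
`S ⊆ Mₙ(D)`: for every `M ∈ S`, evaluating `f` at the image of `M` in `Mₙ(K)` yields a matrix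
all of whose entries lie in (the image of) `D`. -/
def IntOn (D K : Type*) [CommRing D] [Field K] [Algebra D K] {n : ℕ}
    (S : Set (Matrix (Fin n) (Fin n) D)) : Set (Polynomial K) :=
  {f | ∀ M ∈ S, ∀ i j, ∃ d : D,
    algebraMap D K d = (Polynomial.aeval (M.map (algebraMap D K)) f) i j}

/-- Over a finite field `F`, for any `n > 0` there is an `n × n` matrix whose characteristic
polynomial is irreducible. -/
lemma exists_matrix_irreducible_charpoly (F : Type*) [Field F] [Finite F] (n : ℕ)
    (hn : 0 < n) : ∃ C : Matrix (Fin n) (Fin n) F, Irreducible C.charpoly := by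
  haveI : Fintype F := Fintype.ofFinite F
  set p := ringChar F with hp_def
  haveI : CharP F p := ringChar.charP F
  have hp : p.Prime := CharP.char_is_prime F p
  haveI : Fact p.Prime := ⟨hp⟩
  obtain ⟨k, -, hcard⟩ := FiniteField.card F p
  have hq1 : 1 < Fintype.card F := Fintype.one_lt_card
  set q := Fintype.card F with hq_def
  set g : F[X] := X ^ q ^ n - X with hg
  have hpq : p ∣ q ^ n := dvd_trans (hcard ▸ dvd_pow_self p k.pos.ne') (dvd_pow_self q hn.ne')
  have hsep : g.Separable := galois_poly_separable p (q ^ n) hpq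
  set E := g.SplittingField with hE
  haveI : Finite E := Module.finite_of_finite F
  haveI : Fintype E := Fintype.ofFinite E
  have aux : g ≠ 0 := FiniteField.X_pow_card_pow_sub_X_ne_zero F hn.ne' hq1
  have key : Fintype.card (g.rootSet E) = g.natDegree :=
    card_rootSet_eq_natDegree hsep (SplittingField.splits g)
  have hdeg : g.natDegree = q ^ n :=
    FiniteField.X_pow_card_pow_sub_X_natDegree_eq F hn.ne' hq1
  haveI : CharP E p := (Algebra.charP_iff F E p).mp ‹_›
  haveI : ExpChar E p := ExpChar.prime hp
  have hqn : q ^ n = p ^ ((k : ℕ) * n) := by rw [hcard, ← pow_mul]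
  have huniv : g.rootSet E = Set.univ := by
    rw [Set.eq_univ_iff_forall]
    suffices h : ∀ x, x ∈ (⊤ : Subalgebra F E) → x ∈ g.rootSet E by
      intro x; exact h x (by trivial)
    rw [← SplittingField.adjoin_rootSet]
    simp_rw [Algebra.mem_adjoin_iff]
    intro x hx
    refine Subring.closure_induction ?_ ?_ ?_ ?_ ?_ ?_ hx <;>
      simp_rw [mem_rootSet_of_ne aux]
    · rintro x (⟨r, rfl⟩ | hx)
      · simp only [hg, map_sub, map_pow, aeval_X]
        rw [← map_pow, FiniteField.pow_card_pow, sub_self]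
      · rwa [mem_rootSet_of_ne aux] at hx
    · have : q ^ n ≠ 0 := by positivity
      simp [hg, zero_pow this]
    · simp [hg, one_pow]
    · intro x y _ _ hx hy
      simp only [hg, aeval_X_pow, aeval_X, map_sub, sub_eq_zero] at *
      rw [hqn] at hx hy ⊢
      rw [add_pow_char_pow, hx, hy]
    · intro x _ hx
      simp only [hg, sub_eq_zero, aeval_X_pow, aeval_X, map_sub, sub_neg_eq_add] at *
      rw [hqn] at hx ⊢
      rw [neg_pow, hx, neg_one_pow_char_pow]
      ring
    · intro x y _ _ hx hy
      simp only [hg, aeval_X_pow, aeval_X, map_sub, mul_pow, sub_eq_zero] at *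
      rw [hx, hy]
  have hcardE : Fintype.card E = q ^ n := by
    rw [← hdeg, ← key]
    exact Fintype.card_congr ((Equiv.Set.univ E).symm.trans (Equiv.setCongr huniv.symm))
  have hfin : Module.finrank F E = n := by
    have hc := Module.card_eq_pow_finrank (K := F) (V := E)
    rw [hcardE] at hc
    exact (Nat.pow_right_injective hq1 hc).symm
  let pb := Field.powerBasisOfFiniteOfSeparable F E
  have hdim : pb.dim = n := by rw [← pb.finrank]; exact hfin
  refine ⟨Matrix.reindex (finCongr hdim) (finCongr hdim)
    (Algebra.leftMulMatrix pb.basis pb.gen), ?_⟩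
  rw [Matrix.charpoly_reindex, charpoly_leftMulMatrix]
  exact minpoly.irreducible pb.isIntegral_gen

/-- Commutation of polynomial evaluation at a matrix with entrywise ring-hom mapping. -/
lemma aeval_matrix_map {D K : Type*} [CommRing D] [CommRing K] (φ : D →+* K) {n : ℕ}
    (M : Matrix (Fin n) (Fin n) D) (g : D[X]) :
    Polynomial.aeval (M.map φ) (g.map φ) = (Polynomial.aeval M g).map φ := by
  rw [Polynomial.aeval_def, Polynomial.aeval_def, Polynomial.eval₂_map]
  have h1 : (M.map φ) = φ.mapMatrix M := rfl
  have h2 : (Polynomial.eval₂ (algebraMap D (Matrix (Fin n) (Fin n) D)) M g).map φ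
      = φ.mapMatrix (Polynomial.eval₂ (algebraMap D (Matrix (Fin n) (Fin n) D)) M g) := rfl
  rw [h1, h2, Polynomial.hom_eval₂]
  congr 1
  ext d i j
  simp [Matrix.algebraMap_matrix_apply, apply_ite φ]

/-- Given the hypothesis on maximal ideals of finite index, every matrix over `D` is congruent
modulo any nonzero `b` to a matrix with irreducible characteristic polynomial. -/
lemma exists_irreducible_charpoly_congruent {D : Type*} [CommRing D] [IsDomain D]
    (hmax : (⨅ m ∈ {m : Ideal D | m.IsMaximal ∧ Finite (D ⧸ m)}, m) = ⊥)
    {n : ℕ} (hn : 0 < n) (M : Matrix (Fin n) (Fin n) D) {b : D} (hb : b ≠ 0) :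
    ∃ N : Matrix (Fin n) (Fin n) D, Irreducible N.charpoly ∧
      ∀ i j, ∃ c, N i j = M i j + b * c := by
  have hbmem : b ∉ (⨅ m ∈ {m : Ideal D | m.IsMaximal ∧ Finite (D ⧸ m)}, m) := by
    rw [hmax]; simpa using hb
  simp only [Submodule.mem_iInf, not_forall] at hbmem
  obtain ⟨m, hm, hbm⟩ := hbmem
  obtain ⟨hm_max, hm_fin⟩ := hm
  haveI : m.IsMaximal := hm_max
  letI : Field (D ⧸ m) := Ideal.Quotient.field m
  haveI : Finite (D ⧸ m) := hm_fin
  obtain ⟨C, hC⟩ := exists_matrix_irreducible_charpoly (D ⧸ m) n hn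
  set π := Ideal.Quotient.mk m with hπ
  have hbu : π b ≠ 0 := by rwa [Ne, Ideal.Quotient.eq_zero_iff_mem]
  have hsurj : Function.Surjective π := Ideal.Quotient.mk_surjective
  choose A hA using fun i j => hsurj ((π b)⁻¹ * (C i j - π (M i j)))
  set N : Matrix (Fin n) (Fin n) D := M + b • Matrix.of A with hN
  have hNentry : ∀ i j, N i j = M i j + b * A i j := by
    intro i j
    simp [hN, Matrix.add_apply, Matrix.smul_apply, smul_eq_mul]
  have hNmap : N.map π = C := by
    ext i j
    rw [Matrix.map_apply, hNentry i j, map_add, map_mul, hA, ← mul_assoc,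
      mul_inv_cancel₀ hbu, one_mul]
    ring
  refine ⟨N, ?_, fun i j => ⟨A i j, hNentry i j⟩⟩
  refine Polynomial.Monic.irreducible_of_irreducible_map π N.charpoly
    (Matrix.charpoly_monic N) ?_
  rwa [← Matrix.charpoly_map, hNmap]

/-- Let `D` be a domain with quotient field `K` such that the intersection of
the maximal ideals of `D` of finite index (those `m` with `D/m` finite) is the zero ideal, and
let `n` be positive.  Then `Int(Mₙ(D)) = Int(Mₙ^{irr}(D), Mₙ(D))`, where `Mₙ^{irr}(D)` is the
set of matrices whose characteristic polynomial is irreducible in `D[X]`; i.e. `Mₙ^{irr}(D)` is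
polynomially dense in `Mₙ(D)`. -/
theorem intOn_univ_eq_intOn_irreducible (D K : Type*) [CommRing D] [IsDomain D] [Field K]
    [Algebra D K] [IsFractionRing D K]
    (hmax : (⨅ m ∈ {m : Ideal D | m.IsMaximal ∧ Finite (D ⧸ m)}, m) = ⊥)
    (n : ℕ) (hn : 0 < n) :
    IntOn D K (Set.univ : Set (Matrix (Fin n) (Fin n) D)) =
      IntOn D K {M : Matrix (Fin n) (Fin n) D | Irreducible M.charpoly} := by
  ext f
  simp only [IntOn, Set.mem_setOf_eq]
  constructor
  · intro h M _ i j
    exact h M (Set.mem_univ M) i j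
  · intro h M _ i j
    set φ := algebraMap D K with hφ
    have hφinj : Function.Injective φ := IsFractionRing.injective D K
    obtain ⟨b, hbspec⟩ :=
      IsLocalization.integerNormalization_map_to_map (nonZeroDivisors D) f
    set g := IsLocalization.integerNormalization (nonZeroDivisors D) f with hgdef
    have hb0 : (b : D) ≠ 0 := nonZeroDivisors.ne_zero b.2
    have hφb : φ (b : D) ≠ 0 := fun hc => hb0 (hφinj (by rw [hc, map_zero]))
    obtain ⟨N, hNirr, hNc⟩ := exists_irreducible_charpoly_congruent hmax hn M hb0
    -- key scalar identity: evaluating `g` is `φ b` times evaluating `f`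
    have hsm : ∀ P : Matrix (Fin n) (Fin n) D,
        (Polynomial.aeval (P.map φ)) (g.map φ)
          = φ (b : D) • (Polynomial.aeval (P.map φ)) f := by
      intro P
      rw [hbspec, ← algebraMap_smul K (b : D) f, map_smul]
    -- values of `f` at `N` are integral
    choose e he using h N hNirr
    -- entrywise congruence of `g`-values mod `b`
    have hcong : ∃ c : D,
        (Polynomial.aeval M g) i j = (Polynomial.aeval N g) i j + (b : D) * c := by
      set ρ := Ideal.Quotient.mk (Ideal.span {(b : D)}) with hρ
      have hmapNM : N.map ρ = M.map ρ := by
        ext i' j'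
        obtain ⟨c, hc⟩ := hNc i' j'
        have hρb : ρ (b : D) = 0 :=
          Ideal.Quotient.eq_zero_iff_mem.mpr (Ideal.mem_span_singleton_self _)
        simp [Matrix.map_apply, hc, map_add, map_mul, hρb]
      have : (Polynomial.aeval M g).map ρ = (Polynomial.aeval N g).map ρ := by
        rw [← aeval_matrix_map ρ M g, ← aeval_matrix_map ρ N g, hmapNM]
      have hentry : ρ ((Polynomial.aeval M g) i j) = ρ ((Polynomial.aeval N g) i j) := by
        have := congrArg (fun (P : Matrix (Fin n) (Fin n) (D ⧸ Ideal.span {(b : D)})) => P i j)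
          this
        simpa [Matrix.map_apply] using this
      have hdvd : (b : D) ∣ (Polynomial.aeval M g) i j - (Polynomial.aeval N g) i j := by
        rw [← Ideal.mem_span_singleton]
        rw [← Ideal.Quotient.eq_zero_iff_mem, map_sub, hentry, sub_self]
      obtain ⟨c, hc⟩ := hdvd
      exact ⟨c, by linear_combination hc⟩
    obtain ⟨c, hc⟩ := hcong
    -- value of g at N entry: φ ((aeval N g) i j) = φ b * φ (e i j)
    have hgN : (Polynomial.aeval N g) i j = (b : D) * e i j := by
      apply hφinj
      have h1 : φ ((Polynomial.aeval N g) i j)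
          = ((Polynomial.aeval N g).map φ) i j := by simp [Matrix.map_apply]
      rw [h1, ← aeval_matrix_map φ N g, hsm N, Matrix.smul_apply, smul_eq_mul, ← he i j,
        map_mul]
    refine ⟨e i j + c, ?_⟩
    apply mul_left_cancel₀ hφb
    have h2 : φ (b : D) * (Polynomial.aeval (M.map φ) f) i j
        = (Polynomial.aeval (M.map φ) (g.map φ)) i j := by
      rw [hsm M, Matrix.smul_apply, smul_eq_mul]
    rw [h2, aeval_matrix_map φ M g]
    have h3 : ((Polynomial.aeval M g).map φ) i j = φ ((Polynomial.aeval M g) i j) := by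
      simp [Matrix.map_apply]
    rw [h3, hc, hgN, ← map_mul]
    congr 1
    ring
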